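/- Let 𝔤 be a finite-dimensional real semisimple Lie algebra, U an open connected subset of a finite-dimensional real normed space, and ξ : U → 𝔤 a complementary-pair configuration with eigenspace bundles 𝔤_j(x), parabolic bundles f, f̂ and 1-forms β, β̂. Let η be a closed 𝔤-valued 1-form with η_x(u) ∈ f(x)^⊥ = 𝔤_{−1}(x) for all x, u, let m ∈ ℝ∖{0}, and suppose f̂ is parallel for ∇^m = d + mη (so f̂ is a Darboux transform of the isothermic map (f, η) with parameter m). Then: (1) β̂ = mη; (2) η̂ := β/m is closed with η̂_x(u) ∈ f̂(x)^⊥ = 𝔤_1(x), so (f̂, η̂) is isothermic; (3) for every t ∈ ℝ∖{m} and every smooth ψ : U → 𝔤, writing Γ(s)(x) for the automorphism of 𝔤 acting as s on 𝔤_1(x), 1 on 𝔤_0(x) and s⁻¹ on 𝔤_{−1}(x), one has Γ(1 − t/m)(x)((Dψ)_x(u) + t⁅η_x(u), ψ(x)⁆) = (D(Γ(1 − t/m)ψ))_x(u) + t⁅η̂_x(u), Γ(1 − t/m)(x)(ψ(x))⁆, i.e. Γ(1 − t/m) gauges d + tη to d + tη̂; (4) f is parallel for d + mη̂, i.e. f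 is a Darboux transform of (f̂, η̂) with parameter m. -/

import Mathlib

open Module

/-- A Lie algebra structure on a real normed space, recorded as a bilinear bracket.
(Using a bracket carried as data avoids typeclass diamonds between the normed and
the Lie-algebraic structure.) -/
structure LieStructure (L : Type*) [NormedAddCommGroup L] [NormedSpace ℝ L] where
  bracket : L →ₗ[ℝ] L →ₗ[ℝ] L
  alternating : ∀ x : L, bracket x x = 0
  jacobi : ∀ x y z : L, bracket x (bracket y z) =
    bracket (bracket x y) z + bracket y (bracket x z)

namespace LieStructure

variable {L : Type*} [NormedAddCommGroup L] [NormedSpace ℝ L] (B : LieStructure L)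

/-- The adjoint action `ad x = ⁅x, ·⁆`. -/
def ad (x : L) : Module.End ℝ L := B.bracket x

/-- The Killing form `κ(x, y) = tr (ad x ∘ ad y)`. -/
noncomputable def killing (x y : L) : ℝ := LinearMap.trace ℝ L (B.ad x * B.ad y)

/-- Semisimplicity, via Cartan's criterion: the Killing form is nondegenerate. -/
def IsSemisimple : Prop := ∀ x : L, (∀ y : L, B.killing x y = 0) → x = 0

/-- A Lie subalgebra: a submodule closed under the bracket. -/
def IsSubalgebra (p : Submodule ℝ L) : Prop :=
  ∀ x ∈ p, ∀ y ∈ p, B.bracket x y ∈ p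

/-- The Killing polar `𝔭^⊥`. -/
noncomputable def polar (p : Submodule ℝ L) : Submodule ℝ L where
  carrier := {x | ∀ y ∈ p, B.killing x y = 0}
  add_mem' := fun {a b} ha hb y hy => by
    have : B.killing (a + b) y = B.killing a y + B.killing b y := by
      simp [killing, ad, map_add, add_mul]
    rw [this, ha y hy, hb y hy, add_zero]
  zero_mem' := fun y hy => by simp [killing, ad, map_zero, zero_mul]
  smul_mem' := fun c a ha y hy => by
    have : B.killing (c • a) y = c * B.killing a y := by
      simp [killing, ad, map_smul, smul_mul_assoc]
    rw [this, ha y hy, mul_zero]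

/-- A height-one parabolic subalgebra: a subalgebra whose Killing polar is an
abelian (hence nilpotent) subalgebra. -/
def IsH1Parabolic (p : Submodule ℝ L) : Prop :=
  B.IsSubalgebra p ∧ ∀ x ∈ B.polar p, ∀ y ∈ B.polar p, B.bracket x y = 0

/-- Complementary pair of height-one parabolic subalgebras:
`𝔤 = 𝔭 ⊕ 𝔮^⊥` and `𝔤 = 𝔮 ⊕ 𝔭^⊥`. -/
noncomputable def ComplPair (p q : Submodule ℝ L) : Prop :=
  IsCompl p (B.polar q) ∧ IsCompl q (B.polar p)

/-- `exp (ad z)`, the finite exponential series of the adjoint action (exhaustive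
whenever `ad z` is nilpotent, since then `(ad z)^(dim 𝔤 + 1) = 0`). -/
noncomputable def expAd [FiniteDimensional ℝ L] (z : L) : Module.End ℝ L :=
  ∑ k ∈ Finset.range (Module.finrank ℝ L + 1), (k.factorial : ℝ)⁻¹ • (B.ad z) ^ k

end LieStructure

namespace LieStructure

variable {L : Type*} [NormedAddCommGroup L] [NormedSpace ℝ L] (B : LieStructure L)

/-- The `j`-eigenspace `𝔤_j(x) = ker (ad ξ(x) − j·id)` of a complementary-pair
configuration. -/
noncomputable def eigSp (ξx : L) (j : ℝ) : Submodule ℝ L :=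
  LinearMap.ker (B.ad ξx - j • (1 : Module.End ℝ L))

variable {E : Type*} [NormedAddCommGroup E] [NormedSpace ℝ E]

/-- The 1-form `β`, the `𝔤₁`-part of `dξ`: `β_x(u) = ½((ad ξ(x))² + ad ξ(x))(dξ_x(u))`. -/
noncomputable def beta [FiniteDimensional ℝ L] (ξ : E → L) (x : E) : E →L[ℝ] L :=
  (LinearMap.toContinuousLinearMap
    ((2⁻¹ : ℝ) • ((B.ad (ξ x)) ^ 2 + B.ad (ξ x)))).comp (fderiv ℝ ξ x)

/-- The 1-form `β̂`, the `𝔤₋₁`-part of `dξ`: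
`β̂_x(u) = −½((ad ξ(x))² − ad ξ(x))(dξ_x(u))`. -/
noncomputable def betaHat [FiniteDimensional ℝ L] (ξ : E → L) (x : E) : E →L[ℝ] L :=
  (LinearMap.toContinuousLinearMap
    (-((2⁻¹ : ℝ) • ((B.ad (ξ x)) ^ 2 - B.ad (ξ x))))).comp (fderiv ℝ ξ x)

/-- `Γ(s)` at a point: the endomorphism acting as `s` on `𝔤₁`, `1` on `𝔤₀` and
`s⁻¹` on `𝔤₋₁`, expressed through the eigenprojections of `ad ξ(x)`. -/
noncomputable def gam (ξx : L) (s : ℝ) : Module.End ℝ L :=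
  s • ((2⁻¹ : ℝ) • ((B.ad ξx) ^ 2 + B.ad ξx)) +
  ((1 : Module.End ℝ L) - (B.ad ξx) ^ 2) +
  s⁻¹ • ((2⁻¹ : ℝ) • ((B.ad ξx) ^ 2 - B.ad ξx))

end LieStructure
namespace LieStructure

variable {L : Type*} [NormedAddCommGroup L] [NormedSpace ℝ L] (B : LieStructure L)

lemma br_antisymm (x y : L) : B.bracket x y = - B.bracket y x := by
  have h := B.alternating (x + y)
  simp only [map_add, LinearMap.add_apply, B.alternating x, B.alternating y,
    zero_add, add_zero] at h
  rw [eq_neg_iff_add_eq_zero, add_comm]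
  exact h

lemma br_eig {a b c : L} {j k : ℝ} (hb : B.bracket a b = j • b) (hc : B.bracket a c = k • c) :
    B.bracket a (B.bracket b c) = (j + k) • B.bracket b c := by
  have h := B.jacobi a b c
  rw [hb, hc, map_smul (B.bracket b) k c] at h
  rw [map_smul B.bracket j b] at h
  rw [h, LinearMap.smul_apply, add_smul]

lemma eig_kill {a b : L}
    (hA : ∀ v, B.bracket a (B.bracket a (B.bracket a v)) = B.bracket a v)
    {c : ℝ} (hb : B.bracket a b = c • b) (hc : c ^ 3 ≠ c) : b = 0 := by
  have h := hA b
  simp only [hb, map_smul, smul_smul] at h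
  have h2 : (c ^ 3 - c) • b = 0 := by
    rw [sub_smul, sub_eq_zero, pow_succ, pow_succ, pow_one]
    exact h
  rcases smul_eq_zero.mp h2 with h3 | h3
  · exact absurd (by linarith [sub_eq_zero.mp h3]) hc
  · exact h3

lemma eig_decomp {a : L}
    (hA : ∀ v, B.bracket a (B.bracket a (B.bracket a v)) = B.bracket a v) (p : L) :
    ∃ p1 p0 pm, p = p1 + p0 + pm ∧ B.bracket a p1 = p1 ∧ B.bracket a p0 = 0 ∧
      B.bracket a pm = - pm := by
  refine ⟨(2⁻¹ : ℝ) • (B.bracket a (B.bracket a p) + B.bracket a p),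
    p - B.bracket a (B.bracket a p),
    (2⁻¹ : ℝ) • (B.bracket a (B.bracket a p) - B.bracket a p), by module, ?_, ?_, ?_⟩
  · rw [map_smul, map_add, hA p]; module
  · rw [map_sub, hA p]; module
  · rw [map_smul, map_sub, hA p]; module

end LieStructure
namespace LieStructure

variable {L : Type*} [NormedAddCommGroup L] [NormedSpace ℝ L] (B : LieStructure L)

lemma mem_eigSp {a v : L} {j : ℝ} : v ∈ B.eigSp a j ↔ B.bracket a v = j • v := by
  simp [eigSp, LinearMap.mem_ker, LinearMap.sub_apply, LinearMap.smul_apply,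
    Module.End.one_apply, sub_eq_zero, ad]

lemma gam_apply (a : L) (s : ℝ) (q : L) :
    B.gam a s q = (2⁻¹ * s - 1 + 2⁻¹ * s⁻¹) • B.bracket a (B.bracket a q) +
      (2⁻¹ * s - 2⁻¹ * s⁻¹) • B.bracket a q + q := by
  simp only [gam, ad, LinearMap.add_apply, LinearMap.smul_apply, LinearMap.sub_apply,
    Module.End.one_apply, pow_two, Module.End.mul_apply]
  module

variable {E : Type*} [NormedAddCommGroup E] [NormedSpace ℝ E]

lemma beta_apply [FiniteDimensional ℝ L] (ξ : E → L) (x : E) (u : E) :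
    B.beta ξ x u = (2⁻¹ : ℝ) •
      (B.bracket (ξ x) (B.bracket (ξ x) (fderiv ℝ ξ x u)) + B.bracket (ξ x) (fderiv ℝ ξ x u)) := by
  simp only [beta, ad, ContinuousLinearMap.comp_apply, LinearMap.coe_toContinuousLinearMap',
    LinearMap.smul_apply, LinearMap.add_apply, pow_two, Module.End.mul_apply]

lemma betaHat_apply [FiniteDimensional ℝ L] (ξ : E → L) (x : E) (u : E) :
    B.betaHat ξ x u = -((2⁻¹ : ℝ) •
      (B.bracket (ξ x) (B.bracket (ξ x) (fderiv ℝ ξ x u)) - B.bracket (ξ x) (fderiv ℝ ξ x u))) := by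
  simp only [betaHat, ad, ContinuousLinearMap.comp_apply, LinearMap.coe_toContinuousLinearMap',
    LinearMap.neg_apply, LinearMap.smul_apply, LinearMap.sub_apply, pow_two, Module.End.mul_apply]

/-- On `𝔤₀ ⊔ 𝔤₁`, `A² = A`. -/
lemma sq_eq_of_mem_sup01 {a z : L} (hz : z ∈ B.eigSp a 0 ⊔ B.eigSp a 1) :
    B.bracket a (B.bracket a z) = B.bracket a z := by
  obtain ⟨y, hy, w, hw, rfl⟩ := Submodule.mem_sup.mp hz
  rw [B.mem_eigSp] at hy hw
  rw [zero_smul] at hy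
  rw [one_smul] at hw
  simp only [map_add, hy, hw, map_zero, zero_add]

/-- If `A²z + Az = 0` then `z ∈ 𝔤₋₁ ⊔ 𝔤₀`. -/
lemma mem_sup_m10 {a z : L}
    (hA : ∀ v, B.bracket a (B.bracket a (B.bracket a v)) = B.bracket a v)
    (hz : B.bracket a (B.bracket a z) + B.bracket a z = 0) :
    z ∈ B.eigSp a (-1) ⊔ B.eigSp a 0 := by
  obtain ⟨p1, p0, pm, hsum, h1, h0, hm⟩ := B.eig_decomp hA z
  have hp1 : p1 = 0 := by
    have e : B.bracket a (B.bracket a z) + B.bracket a z = p1 + p1 := by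
      rw [hsum]
      simp only [map_add, h1, h0, hm, map_neg, map_zero]
      module
    rw [hz] at e
    have : (2 : ℝ) • p1 = 0 := by rw [two_smul]; exact e.symm
    simpa using this
  refine Submodule.mem_sup.mpr ⟨pm, ?_, p0, ?_, ?_⟩
  · rw [B.mem_eigSp, hm]; module
  · rw [B.mem_eigSp, h0, zero_smul]
  · rw [hsum, hp1]; module

noncomputable def brC [FiniteDimensional ℝ L] : L →L[ℝ] L →L[ℝ] L :=
  LinearMap.toContinuousLinearMap
    { toFun := fun a => LinearMap.toContinuousLinearMap (B.bracket a)
      map_add' := fun a b => by ext v; simp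
      map_smul' := fun c a => by ext v; simp }

@[simp] lemma brC_apply [FiniteDimensional ℝ L] (a b : L) : B.brC a b = B.bracket a b := by
  simp [brC]

end LieStructure
namespace LieStructure

variable {L : Type*} [NormedAddCommGroup L] [NormedSpace ℝ L] (B : LieStructure L)

lemma grade_zero_vanish (hss : B.IsSemisimple) {a w : L}
    (hA : ∀ v, B.bracket a (B.bracket a (B.bracket a v)) = B.bracket a v)
    (hW : ∀ v, B.bracket w (B.bracket a (B.bracket a v)) +
      B.bracket a (B.bracket w (B.bracket a v)) +
      B.bracket a (B.bracket a (B.bracket w v)) = B.bracket w v) :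
    B.bracket a (B.bracket a w) = w := by
  obtain ⟨z1, z0, zm, hsum, h1, h0, hm⟩ := B.eig_decomp hA w
  have key : ∀ k : ℝ, k = 1 ∨ k = 0 ∨ k = -1 → ∀ v, B.bracket a v = k • v →
      B.bracket z0 v = 0 := by
    intro k hk v hv
    have hWv := hW v
    have e1 : B.bracket a (B.bracket z1 v) = (1 + k) • B.bracket z1 v :=
      B.br_eig (by rw [h1, one_smul]) hv
    have e0 : B.bracket a (B.bracket z0 v) = (0 + k) • B.bracket z0 v :=
      B.br_eig (by rw [h0, zero_smul]) hv
    have em : B.bracket a (B.bracket zm v) = (-1 + k) • B.bracket zm v :=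
      B.br_eig (by rw [hm, neg_one_smul]) hv
    rw [hsum] at hWv
    simp only [map_add, LinearMap.add_apply, hv, map_smul, e1, e0, em, smul_add,
      smul_smul] at hWv
    rcases hk with rfl | rfl | rfl
    · have hz1 : B.bracket z1 v = 0 :=
        B.eig_kill hA (c := 2) (by rw [e1]; norm_num) (by norm_num)
      rw [hz1] at hWv
      linear_combination (norm := module) ((2:ℝ)⁻¹) • hWv
    · linear_combination (norm := module) -hWv
    · have hzm : B.bracket zm v = 0 :=
        B.eig_kill hA (c := -2) (by rw [em]; norm_num) (by norm_num)
      rw [hzm] at hWv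
      linear_combination (norm := module) ((2:ℝ)⁻¹) • hWv
  have hz0 : z0 = 0 := by
    refine hss z0 fun y => ?_
    have had : B.ad z0 = 0 := by
      apply LinearMap.ext
      intro v
      obtain ⟨v1, v0, vm, hvs, hv1, hv0, hvm⟩ := B.eig_decomp hA v
      have b1 := key 1 (Or.inl rfl) v1 (by rw [hv1, one_smul])
      have b0 := key 0 (Or.inr (Or.inl rfl)) v0 (by rw [hv0, zero_smul])
      have bm := key (-1) (Or.inr (Or.inr rfl)) vm (by rw [hvm, neg_one_smul])
      show B.bracket z0 v = 0
      rw [hvs, map_add, map_add, b1, b0, bm]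
      simp
    simp [killing, had]
  rw [hsum, hz0]
  simp only [map_add, h1, h0, hm, map_zero, map_neg]
  module
end LieStructure
namespace LieStructure

variable {L : Type*} [NormedAddCommGroup L] [NormedSpace ℝ L] (B : LieStructure L)

lemma gauge_alg_eig {a zM zN : L}
    (hA : ∀ v, B.bracket a (B.bracket a (B.bracket a v)) = B.bracket a v)
    (hM : B.bracket a zM = zM) (hN : B.bracket a zN = -zN)
    {s t m : ℝ} (hs : s ≠ 0) (hm : m ≠ 0) (ht : t = m * (1 - s))
    {k : ℝ} (hk : k = 1 ∨ k = 0 ∨ k = -1) {p : L} (hp : B.bracket a p = k • p) :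
    t • B.gam a s (B.bracket zN p) =
      (2⁻¹ * s - 1 + 2⁻¹ * s⁻¹) • (B.bracket (zM - m • zN) (B.bracket a p) +
        B.bracket a (B.bracket (zM - m • zN) p)) +
      (2⁻¹ * s - 2⁻¹ * s⁻¹) • B.bracket (zM - m • zN) p +
      (t / m) • B.bracket zM (B.gam a s p) := by
  have ebM : B.bracket a (B.bracket zM p) = (1 + k) • B.bracket zM p :=
    B.br_eig (by rw [hM, one_smul]) hp
  have ebN : B.bracket a (B.bracket zN p) = (-1 + k) • B.bracket zN p :=
    B.br_eig (by rw [hN, neg_one_smul]) hp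
  subst ht
  rcases hk with rfl | rfl | rfl
  · have hzM : B.bracket zM p = 0 :=
      B.eig_kill hA (c := 2) (by rw [ebM]; norm_num) (by norm_num)
    simp only [gam_apply, map_sub, map_smul, map_add, LinearMap.sub_apply,
      LinearMap.smul_apply, hp, ebM, ebN, hzM, smul_zero, map_zero, smul_smul,
      smul_add, smul_sub, sub_zero, zero_sub, add_zero, zero_add, smul_neg, map_neg, neg_smul]
    match_scalars <;> field_simp <;> ring
  · simp only [gam_apply, map_sub, map_smul, map_add, LinearMap.sub_apply,
      LinearMap.smul_apply, hp, ebM, ebN, smul_smul, smul_add, smul_sub, zero_smul,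
      smul_zero, map_zero, add_zero, zero_add, sub_zero, smul_neg, map_neg, neg_smul]
    match_scalars <;> field_simp <;> ring
  · have hzN : B.bracket zN p = 0 :=
      B.eig_kill hA (c := -2) (by rw [ebN]; norm_num) (by norm_num)
    simp only [gam_apply, map_sub, map_smul, map_add, LinearMap.sub_apply,
      LinearMap.smul_apply, hp, ebM, ebN, hzN, smul_zero, map_zero, smul_smul,
      smul_add, smul_sub, sub_zero, zero_sub, add_zero, zero_add, smul_neg, map_neg, neg_smul]
    match_scalars <;> field_simp <;> ring

lemma gauge_alg {a zM zN : L}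
    (hA : ∀ v, B.bracket a (B.bracket a (B.bracket a v)) = B.bracket a v)
    (hM : B.bracket a zM = zM) (hN : B.bracket a zN = -zN)
    {s t m : ℝ} (hs : s ≠ 0) (hm : m ≠ 0) (ht : t = m * (1 - s)) (p : L) :
    t • B.gam a s (B.bracket zN p) =
      (2⁻¹ * s - 1 + 2⁻¹ * s⁻¹) • (B.bracket (zM - m • zN) (B.bracket a p) +
        B.bracket a (B.bracket (zM - m • zN) p)) +
      (2⁻¹ * s - 2⁻¹ * s⁻¹) • B.bracket (zM - m • zN) p +
      (t / m) • B.bracket zM (B.gam a s p) := by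
  obtain ⟨p1, p0, pm, hsum, h1, h0, hmm⟩ := B.eig_decomp hA p
  have E1 := B.gauge_alg_eig hA hM hN hs hm ht (Or.inl rfl) (p := p1)
    (by rw [h1, one_smul])
  have E0 := B.gauge_alg_eig hA hM hN hs hm ht (Or.inr (Or.inl rfl)) (p := p0)
    (by rw [h0, zero_smul])
  have Em := B.gauge_alg_eig hA hM hN hs hm ht (Or.inr (Or.inr rfl)) (p := pm)
    (by rw [hmm, neg_one_smul])
  rw [hsum]
  simp only [map_add, smul_add]
  linear_combination (norm := module) E1 + E0 + Em

end LieStructure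
namespace LieStructure

variable {L : Type*} [NormedAddCommGroup L] [NormedSpace ℝ L] (B : LieStructure L)

lemma decomp_m10 {a p : L}
    (hA : ∀ v, B.bracket a (B.bracket a (B.bracket a v)) = B.bracket a v)
    (hp : B.bracket a (B.bracket a p) + B.bracket a p = 0) :
    ∃ p0 pm, p = p0 + pm ∧ B.bracket a p0 = 0 ∧ B.bracket a pm = -pm := by
  refine ⟨p - B.bracket a (B.bracket a p), B.bracket a (B.bracket a p), by module, ?_, ?_⟩
  · rw [map_sub, hA p, sub_self]
  · rw [hA p]
    linear_combination (norm := module) hp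

lemma part4_alg {a zM zN p : L}
    (hA : ∀ v, B.bracket a (B.bracket a (B.bracket a v)) = B.bracket a v)
    (hM : B.bracket a zM = zM) (hN : B.bracket a zN = -zN) (m : ℝ)
    (hp : B.bracket a (B.bracket a p) + B.bracket a p = 0) :
    B.bracket a (B.bracket a (B.bracket zM p)) + B.bracket a (B.bracket zM p) =
      B.bracket (zM - m • zN) (B.bracket a p) +
      B.bracket a (B.bracket (zM - m • zN) p) + B.bracket (zM - m • zN) p := by
  obtain ⟨p0, pm, hsum, h0, hmm⟩ := B.decomp_m10 hA hp
  have ebM0 : B.bracket a (B.bracket zM p0) = ((1:ℝ) + 0) • B.bracket zM p0 :=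
    B.br_eig (by rw [hM, one_smul]) (by rw [h0, zero_smul])
  have ebMm : B.bracket a (B.bracket zM pm) = ((1:ℝ) + -1) • B.bracket zM pm :=
    B.br_eig (by rw [hM, one_smul]) (by rw [hmm, neg_one_smul])
  have ebN0 : B.bracket a (B.bracket zN p0) = ((-1:ℝ) + 0) • B.bracket zN p0 :=
    B.br_eig (by rw [hN, neg_one_smul]) (by rw [h0, zero_smul])
  have ebNm : B.bracket zN pm = 0 := by
    refine B.eig_kill hA (c := -2) ?_ (by norm_num)
    have := B.br_eig (a := a) (by rw [hN, neg_one_smul]) (c := pm) (by rw [hmm, neg_one_smul])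
    rw [this]; norm_num
  rw [hsum]
  simp only [map_add, map_sub, map_smul, LinearMap.sub_apply, LinearMap.smul_apply,
    h0, hmm, ebM0, ebMm, ebN0, ebNm, smul_zero, map_zero, add_zero, zero_add,
    smul_add, smul_sub, smul_smul, smul_neg, map_neg, neg_smul, zero_smul, one_smul]
  match_scalars <;> ring

end LieStructure
namespace LieStructure

variable {L : Type*} [NormedAddCommGroup L] [NormedSpace ℝ L] (B : LieStructure L)
variable {E : Type*} [NormedAddCommGroup E] [NormedSpace ℝ E]

lemma deriv_br [FiniteDimensional ℝ L] {ξ φ : E → L} {x : E} {ξ' φ' : E →L[ℝ] L}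
    (hξd : HasFDerivAt ξ ξ' x) (hφd : HasFDerivAt φ φ' x) :
    HasFDerivAt (fun y => B.bracket (ξ y) (φ y))
      ((B.brC (ξ x)).comp φ' + ((B.brC.comp ξ').flip (φ x))) x := by
  have hc : HasFDerivAt (fun y => B.brC (ξ y)) (B.brC.comp ξ') x :=
    B.brC.hasFDerivAt.comp x hξd
  have h := hc.clm_apply hφd
  have he : (fun y => B.brC (ξ y) (φ y)) = fun y => B.bracket (ξ y) (φ y) := by
    funext y; simp
  rwa [he] at h

lemma deriv_br_apply [FiniteDimensional ℝ L] (a b : L) (ξ' φ' : E →L[ℝ] L) (u : E) :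
    ((B.brC a).comp φ' + ((B.brC.comp ξ').flip b)) u
      = B.bracket a (φ' u) + B.bracket (ξ' u) b := by
  simp [ContinuousLinearMap.comp_apply, ContinuousLinearMap.flip_apply]

end LieStructure

open LieStructure

/-- **Darboux transforms are isothermic, and the relationship is reciprocal.**
For an isothermic map `(f, η)` and a Darboux transform `f̂` with parameter `m`
(encoded by a complementary-pair configuration `ξ` with `f̂` parallel for
`∇ᵐ = d + mη`): (1) `β̂ = mη`; (2) `η̂ := β/m` makes `(f̂, η̂)` isothermic;
(3) `Γ(1 − t/m)` gauges `d + tη` to `d + tη̂`; (4) `f` is a Darboux transform of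
`(f̂, η̂)` with parameter `m`. -/
theorem darboux_transform_isothermic
    {L : Type*} [NormedAddCommGroup L] [NormedSpace ℝ L] [FiniteDimensional ℝ L]
    (B : LieStructure L) (hss : B.IsSemisimple)
    {E : Type*} [NormedAddCommGroup E] [NormedSpace ℝ E] [FiniteDimensional ℝ E]
    (U : Set E) (hU : IsOpen U) (hUconn : IsConnected U)
    (ξ : E → L) (hξ : ContDiffOn ℝ (⊤ : ℕ∞) ξ U)
    (hconf : ∀ x ∈ U, (B.ad (ξ x)) ^ 3 = B.ad (ξ x))
    (η : E → E →L[ℝ] L) (hη : ContDiffOn ℝ (⊤ : ℕ∞) η U)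
    (hηval : ∀ x ∈ U, ∀ u : E, η x u ∈ B.eigSp (ξ x) (-1))
    (hηclosed : ∀ x ∈ U, ∀ u v : E, fderiv ℝ η x u v = fderiv ℝ η x v u)
    (m : ℝ) (hm : m ≠ 0)
    -- `f̂ = 𝔤₀ ⊕ 𝔤₁` is parallel for `∇ᵐ = d + mη`
    (hpar : ∀ ψ : E → L, ContDiffOn ℝ (⊤ : ℕ∞) ψ U →
      (∀ x ∈ U, ψ x ∈ B.eigSp (ξ x) 0 ⊔ B.eigSp (ξ x) 1) →
      ∀ x ∈ U, ∀ u : E,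
        fderiv ℝ ψ x u + m • B.bracket (η x u) (ψ x) ∈
          B.eigSp (ξ x) 0 ⊔ B.eigSp (ξ x) 1) :
    -- (1) `β̂ = mη`
    (∀ x ∈ U, ∀ u : E, B.betaHat ξ x u = m • η x u) ∧
    -- (2) `η̂ := β/m` is closed and valued in `f̂^⊥ = 𝔤₁`, so `(f̂, η̂)` is isothermic
    (∀ x ∈ U, ∀ u : E, m⁻¹ • B.beta ξ x u ∈ B.eigSp (ξ x) 1) ∧
    (∀ x ∈ U, ∀ u v : E,
      fderiv ℝ (fun y => m⁻¹ • B.beta ξ y) x u v =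
      fderiv ℝ (fun y => m⁻¹ • B.beta ξ y) x v u) ∧
    -- (3) `Γ(1 − t/m)` gauges `d + tη` to `d + tη̂`
    (∀ t : ℝ, t ≠ m → ∀ ψ : E → L, ContDiffOn ℝ (⊤ : ℕ∞) ψ U →
      ∀ x ∈ U, ∀ u : E,
        B.gam (ξ x) (1 - t / m) (fderiv ℝ ψ x u + t • B.bracket (η x u) (ψ x)) =
        fderiv ℝ (fun y => B.gam (ξ y) (1 - t / m) (ψ y)) x u +
          t • B.bracket (m⁻¹ • B.beta ξ x u) (B.gam (ξ x) (1 - t / m) (ψ x))) ∧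
    -- (4) `f = 𝔤₋₁ ⊕ 𝔤₀` is parallel for `d + mη̂`, i.e. `f = 𝒟_m f̂`
    (∀ ψ : E → L, ContDiffOn ℝ (⊤ : ℕ∞) ψ U →
      (∀ x ∈ U, ψ x ∈ B.eigSp (ξ x) (-1) ⊔ B.eigSp (ξ x) 0) →
      ∀ x ∈ U, ∀ u : E,
        fderiv ℝ ψ x u + m • B.bracket (m⁻¹ • B.beta ξ x u) (ψ x) ∈
          B.eigSp (ξ x) (-1) ⊔ B.eigSp (ξ x) 0) := by
  classical
  -- `(ad ξ x)³ = ad ξ x`, vector form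
  have hAv : ∀ x ∈ U, ∀ v : L,
      B.bracket (ξ x) (B.bracket (ξ x) (B.bracket (ξ x) v)) = B.bracket (ξ x) v := by
    intro x hx v
    have h := congrArg (fun (T : Module.End ℝ L) => T v) (hconf x hx)
    simpa [pow_succ, Module.End.mul_apply, ad] using h
  -- `η` is valued in `𝔤₋₁`
  have hηe : ∀ x ∈ U, ∀ u : E, B.bracket (ξ x) (η x u) = -(η x u) := by
    intro x hx u
    have h := B.mem_eigSp.mp (hηval x hx u)
    rwa [neg_one_smul] at h
  -- differentiability of `ξ` and its derivative
  have hξdAt : ∀ x ∈ U, HasFDerivAt ξ (fderiv ℝ ξ x) x := by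
    intro x hx
    exact ((hξ.contDiffAt (hU.mem_nhds hx)).differentiableAt (by simp)).hasFDerivAt
  -- `β` is valued in `𝔤₁`
  have hMβ : ∀ x ∈ U, ∀ u : E, B.bracket (ξ x) (B.beta ξ x u) = B.beta ξ x u := by
    intro x hx u
    rw [beta_apply, map_smul]
    congr 1
    rw [map_add, hAv x hx (fderiv ℝ ξ x u)]
    abel
  -- part (1)
  have part1 : ∀ x ∈ U, ∀ u : E, B.betaHat ξ x u = m • η x u := by
    intro x hx u
    have hξmem : ∀ y ∈ U, ξ y ∈ B.eigSp (ξ y) 0 ⊔ B.eigSp (ξ y) 1 := fun y hy =>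
      Submodule.mem_sup_left (B.mem_eigSp.mpr (by rw [B.alternating, zero_smul]))
    have hp := hpar ξ hξ hξmem x hx u
    have hsq := B.sq_eq_of_mem_sup01 hp
    have hbr : B.bracket (η x u) (ξ x) = η x u := by
      rw [B.br_antisymm, hηe x hx u, neg_neg]
    rw [hbr] at hsq
    have h1 := hηe x hx u
    have h2 : B.bracket (ξ x) (B.bracket (ξ x) (η x u)) = η x u := by
      rw [h1, map_neg, h1, neg_neg]
    simp only [map_add, map_neg, map_smul, h1, h2, smul_neg, neg_neg] at hsq
    rw [betaHat_apply]
    linear_combination (norm := module) (-(2⁻¹ : ℝ)) • hsq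
  -- part (2), eigenvalue property
  have part2a : ∀ x ∈ U, ∀ u : E, m⁻¹ • B.beta ξ x u ∈ B.eigSp (ξ x) 1 := by
    intro x hx u
    rw [B.mem_eigSp, one_smul, map_smul, hMβ x hx u]
  -- the vector-level derivative of the configuration identity
  have hW : ∀ x ∈ U, ∀ u : E, ∀ v : L,
      B.bracket (fderiv ℝ ξ x u) (B.bracket (ξ x) (B.bracket (ξ x) v)) +
      B.bracket (ξ x) (B.bracket (fderiv ℝ ξ x u) (B.bracket (ξ x) v)) +
      B.bracket (ξ x) (B.bracket (ξ x) (B.bracket (fderiv ℝ ξ x u) v)) =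
      B.bracket (fderiv ℝ ξ x u) v := by
    intro x hx u v
    have hξd := hξdAt x hx
    have hc1 := B.deriv_br hξd (hasFDerivAt_const v x)
    have hc2 := B.deriv_br hξd hc1
    have hc3 := B.deriv_br hξd hc2
    have hg := hc3.sub hc1
    have hzero : (fun y => B.bracket (ξ y) (B.bracket (ξ y) (B.bracket (ξ y) v)) -
        B.bracket (ξ y) v) =ᶠ[nhds x] fun _ => (0 : L) :=
      Filter.eventuallyEq_of_mem (hU.mem_nhds hx) (fun y hy => by
        simp [hAv y hy v, sub_self])
    have hD : fderiv ℝ (fun y => B.bracket (ξ y) (B.bracket (ξ y) (B.bracket (ξ y) v)) -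
        B.bracket (ξ y) v) x = _ := hg.fderiv
    rw [hzero.fderiv_eq, fderiv_const_apply] at hD
    have hDu := congrArg (fun (T : E →L[ℝ] L) => T u) hD
    simp only [ContinuousLinearMap.sub_apply, ContinuousLinearMap.add_apply,
      ContinuousLinearMap.comp_apply, ContinuousLinearMap.flip_apply, brC_apply,
      ContinuousLinearMap.zero_apply, map_zero, zero_add, map_add] at hDu
    linear_combination (norm := module) -hDu
  -- the key pointwise identity `β = dξ + m η`
  have hbeta_eq : ∀ x ∈ U, ∀ u : E, B.beta ξ x u = fderiv ℝ ξ x u + m • η x u := by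
    intro x hx u
    have hAAw := B.grade_zero_vanish hss (hAv x hx) (hW x hx u)
    have hp1x := part1 x hx u
    rw [betaHat_apply] at hp1x
    rw [beta_apply]
    linear_combination (norm := module) hp1x + hAAw
  refine ⟨part1, part2a, ?_, ?_, ?_⟩
  · -- part (2), closedness
    intro x hx u v
    have hxm := hU.mem_nhds hx
    have heq : (fun y => m⁻¹ • B.beta ξ y) =ᶠ[nhds x]
        (fun y => m⁻¹ • (fderiv ℝ ξ y + m • η y)) :=
      Filter.eventuallyEq_of_mem hxm (fun y hy => by
        ext w
        simp only [ContinuousLinearMap.smul_apply, ContinuousLinearMap.add_apply]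
        rw [hbeta_eq y hy w])
    have hdξ' : DifferentiableAt ℝ (fderiv ℝ ξ) x := by
      have h := (hξ.contDiffAt hxm).fderiv_right (m := (⊤ : ℕ∞)) (by exact_mod_cast le_top)
      exact h.differentiableAt (by simp)
    have hdη : DifferentiableAt ℝ η x :=
      (hη.contDiffAt hxm).differentiableAt (by simp)
    have h3 := ((hdξ'.hasFDerivAt.add (hdη.hasFDerivAt.const_smul m)).const_smul m⁻¹)
    have hrw : fderiv ℝ (fun y => m⁻¹ • B.beta ξ y) x =
        m⁻¹ • (fderiv ℝ (fderiv ℝ ξ) x + m • fderiv ℝ η x) :=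
      heq.fderiv_eq.trans h3.fderiv
    have hsym := (hξ.contDiffAt hxm).isSymmSndFDerivAt (by rw [minSmoothness_of_isRCLikeNormedField]; exact WithTop.coe_le_coe.mpr le_top)
    rw [hrw]
    simp only [ContinuousLinearMap.smul_apply, ContinuousLinearMap.add_apply]
    rw [hsym u v, hηclosed x hx u v]
  · -- part (3)
    intro t htm ψ hψ x hx u
    have hxm := hU.mem_nhds hx
    set s := 1 - t / m with hsdef
    have hs : s ≠ 0 := by
      rw [hsdef, sub_ne_zero]
      intro h
      refine htm ?_
      field_simp at h
      linarith
    have ht : t = m * (1 - s) := by rw [hsdef]; field_simp; ring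
    have hξd := hξdAt x hx
    have hψd : HasFDerivAt ψ (fderiv ℝ ψ x) x :=
      ((hψ.contDiffAt hxm).differentiableAt (by simp)).hasFDerivAt
    have h1 := B.deriv_br hξd hψd
    have h2 := B.deriv_br hξd h1
    have hfe : (fun y => B.gam (ξ y) s (ψ y)) = fun y =>
        (2⁻¹ * s - 1 + 2⁻¹ * s⁻¹) • B.bracket (ξ y) (B.bracket (ξ y) (ψ y)) +
        (2⁻¹ * s - 2⁻¹ * s⁻¹) • B.bracket (ξ y) (ψ y) + ψ y :=
      funext fun y => B.gam_apply (ξ y) s (ψ y)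
    have hgd := ((h2.const_smul (2⁻¹ * s - 1 + 2⁻¹ * s⁻¹)).add
      (h1.const_smul (2⁻¹ * s - 2⁻¹ * s⁻¹))).add hψd
    rw [hfe, show fderiv ℝ (fun y =>
        (2⁻¹ * s - 1 + 2⁻¹ * s⁻¹) • B.bracket (ξ y) (B.bracket (ξ y) (ψ y)) +
        (2⁻¹ * s - 2⁻¹ * s⁻¹) • B.bracket (ξ y) (ψ y) + ψ y) x = _ from hgd.fderiv]
    have hw : fderiv ℝ ξ x u = B.beta ξ x u - m • η x u := by
      rw [hbeta_eq x hx u]; module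
    have G := B.gauge_alg (hAv x hx) (hMβ x hx u) (hηe x hx u) hs hm ht (ψ x)
    simp only [ContinuousLinearMap.add_apply, ContinuousLinearMap.smul_apply,
      ContinuousLinearMap.comp_apply, ContinuousLinearMap.flip_apply, brC_apply,
      ContinuousLinearMap.zero_apply]
    rw [hw]
    simp only [gam_apply, map_add, map_smul, map_sub, LinearMap.sub_apply,
      LinearMap.smul_apply, smul_add, smul_smul, smul_sub] at G ⊢
    linear_combination (norm := module) G
  · -- part (4)
    intro ψ hψ hval x hx u
    have hxm := hU.mem_nhds hx
    have hξd := hξdAt x hx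
    have hψd : HasFDerivAt ψ (fderiv ℝ ψ x) x :=
      ((hψ.contDiffAt hxm).differentiableAt (by simp)).hasFDerivAt
    have h0 : ∀ y ∈ U, B.bracket (ξ y) (B.bracket (ξ y) (ψ y)) + B.bracket (ξ y) (ψ y) = 0 := by
      intro y hy
      obtain ⟨p, hp, q, hq, hpq⟩ := Submodule.mem_sup.mp (hval y hy)
      rw [B.mem_eigSp] at hp hq
      rw [neg_one_smul] at hp
      rw [zero_smul] at hq
      rw [← hpq]
      simp only [map_add, hp, hq, map_neg, map_zero, neg_neg, add_zero]
      module
    have h1 := B.deriv_br hξd hψd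
    have h2 := B.deriv_br hξd h1
    have hg := h2.add h1
    have hzero : (fun y => B.bracket (ξ y) (B.bracket (ξ y) (ψ y)) + B.bracket (ξ y) (ψ y))
        =ᶠ[nhds x] fun _ => (0 : L) :=
      Filter.eventuallyEq_of_mem hxm (fun y hy => h0 y hy)
    have hD : fderiv ℝ (fun y => B.bracket (ξ y) (B.bracket (ξ y) (ψ y)) +
        B.bracket (ξ y) (ψ y)) x = _ := hg.fderiv
    rw [hzero.fderiv_eq, fderiv_const_apply] at hD
    have hDu := congrArg (fun (T : E →L[ℝ] L) => T u) hD
    simp only [ContinuousLinearMap.add_apply, ContinuousLinearMap.comp_apply,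
      ContinuousLinearMap.flip_apply, brC_apply, map_add,
      ContinuousLinearMap.zero_apply] at hDu
    have hw : fderiv ℝ ξ x u = B.beta ξ x u - m • η x u := by
      rw [hbeta_eq x hx u]; module
    rw [hw] at hDu
    have P4 := B.part4_alg (hAv x hx) (hMβ x hx u) (hηe x hx u) m (h0 x hx)
    have hsimp : m • B.bracket (m⁻¹ • B.beta ξ x u) (ψ x) = B.bracket (B.beta ξ x u) (ψ x) := by
      rw [map_smul, LinearMap.smul_apply, smul_smul, mul_inv_cancel₀ hm, one_smul]
    rw [hsimp]
    refine B.mem_sup_m10 (hAv x hx) ?_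
    simp only [map_add]
    linear_combination (norm := module) -hDu + P4
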